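/- arXiv:1302.3146 — 2 statements merged into one kernel-verified Lean document; each statement's English description precedes it below -/
import Mathlib

section
/- Differentiability of the smoothed dual: let S ⊆ ℝᴺ be nonempty, compact and convex, b : S → ℝ concave and continuous, and d : S → ℝ strongly convex with parameter σ > 0 and continuous. For c > 0 define ḡ(λ) = max_{s ∈ S} [ b(s) − λᵀs − c·d(s) ] and let s(λ) denote the unique maximizer. Then ḡ is convex and differentiable on ℝᴺ with gradient ∇ḡ(λ) = −s(λ). -/
open RealInnerProductSpace

theorem smoothed_dual_differentiable (N : ℕ) (S : Set (EuclideanSpace ℝ (Fin N)))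
    (hSne : S.Nonempty) (hScpt : IsCompact S) (hScvx : Convex ℝ S)
    (b d : EuclideanSpace ℝ (Fin N) → ℝ)
    (hb : ConcaveOn ℝ S b) (hbc : ContinuousOn b S)
    (σ : ℝ) (hσ : 0 < σ) (hd : StrongConvexOn S σ d) (hdc : ContinuousOn d S)
    (c : ℝ) (hc : 0 < c)
    (smax : EuclideanSpace ℝ (Fin N) → EuclideanSpace ℝ (Fin N))
    (hsmem : ∀ lam, smax lam ∈ S)
    (hsmax : ∀ lam, IsMaxOn (fun s => b s - ⟪lam, s⟫ - c * d s) S (smax lam)) :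
    ConvexOn ℝ Set.univ
        (fun lam => b (smax lam) - ⟪lam, smax lam⟫ - c * d (smax lam)) ∧
    ∀ lam, HasGradientAt
        (fun lam => b (smax lam) - ⟪lam, smax lam⟫ - c * d (smax lam))
        (-(smax lam)) lam := by
  set g : EuclideanSpace ℝ (Fin N) → ℝ :=
    fun lam => b (smax lam) - ⟪lam, smax lam⟫ - c * d (smax lam) with hg
  -- quadratic growth of the gap at the maximizer
  have key : ∀ lam, ∀ x ∈ S,
      c * σ / 4 * ‖x - smax lam‖ ^ 2 ≤
        (b (smax lam) - ⟪lam, smax lam⟫ - c * d (smax lam))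
          - (b x - ⟪lam, x⟫ - c * d x) := by
    intro lam x hx
    have hs := hsmem lam
    have hmem : (1/2 : ℝ) • x + (1/2 : ℝ) • smax lam ∈ S :=
      hScvx hx hs (by norm_num) (by norm_num) (by norm_num)
    have hbm : (1/2 : ℝ) * b x + (1/2 : ℝ) * b (smax lam)
        ≤ b ((1/2 : ℝ) • x + (1/2 : ℝ) • smax lam) := by
      simpa using hb.2 hx hs (by norm_num : (0:ℝ) ≤ 1/2) (by norm_num : (0:ℝ) ≤ 1/2)
        (by norm_num)
    have hdm : d ((1/2 : ℝ) • x + (1/2 : ℝ) • smax lam)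
        ≤ (1/2 : ℝ) * d x + (1/2 : ℝ) * d (smax lam)
          - 1/2 * (1/2) * (σ / 2 * ‖x - smax lam‖ ^ 2) := by
      simpa using hd.2 hx hs (by norm_num : (0:ℝ) ≤ 1/2) (by norm_num : (0:ℝ) ≤ 1/2)
        (by norm_num)
    have hdm' := mul_le_mul_of_nonneg_left hdm hc.le
    have hinner : ⟪lam, (1/2 : ℝ) • x + (1/2 : ℝ) • smax lam⟫
        = (1/2) * ⟪lam, x⟫ + (1/2) * ⟪lam, smax lam⟫ := by
      rw [inner_add_right, real_inner_smul_right, real_inner_smul_right]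
    have hmax := hsmax lam hmem
    simp only [Set.mem_setOf_eq] at hmax
    rw [hinner] at hmax
    nlinarith [hmax, hbm, hdm']
  -- Lipschitz bound on the maximizer map through the gap
  have lip : ∀ lam mu, ‖smax mu - smax lam‖ ≤ 4 / (c * σ) * ‖mu - lam‖ := by
    intro lam mu
    have h1 := key lam (smax mu) (hsmem mu)
    have h2 := key mu (smax lam) (hsmem lam)
    rw [norm_sub_rev] at h2
    have hpos : (0:ℝ) < c * σ := mul_pos hc hσ
    have hsum : c * σ / 2 * ‖smax mu - smax lam‖ ^ 2 ≤
        ⟪mu - lam, smax lam - smax mu⟫ := by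
      have e : ⟪mu - lam, smax lam - smax mu⟫
          = ⟪mu, smax lam⟫ - ⟪lam, smax lam⟫ - (⟪mu, smax mu⟫ - ⟪lam, smax mu⟫) := by
        simp only [inner_sub_left, inner_sub_right]
      rw [e]
      nlinarith [h1, h2]
    have hcs : ⟪mu - lam, smax lam - smax mu⟫ ≤ ‖mu - lam‖ * ‖smax mu - smax lam‖ := by
      rw [show ‖smax mu - smax lam‖ = ‖smax lam - smax mu‖ from norm_sub_rev _ _]
      exact real_inner_le_norm _ _
    rcases eq_or_lt_of_le (norm_nonneg (smax mu - smax lam)) with h0 | h0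
    · rw [← h0]; positivity
    · rw [div_mul_eq_mul_div, le_div_iff₀ hpos]
      nlinarith [hsum, hcs, h0, mul_pos hpos (mul_pos h0 h0)]
  -- sandwich bounds
  have lower : ∀ lam mu, (0:ℝ) ≤ g mu - g lam + ⟪mu - lam, smax lam⟫ := by
    intro lam mu
    have h := hsmax mu (hsmem lam)
    simp only [Set.mem_setOf_eq] at h
    simp only [hg, inner_sub_left]
    linarith [h]
  have upper : ∀ lam mu, g mu - g lam + ⟪mu - lam, smax lam⟫ ≤
      ⟪mu - lam, smax lam - smax mu⟫ := by
    intro lam mu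
    have h := hsmax lam (hsmem mu)
    simp only [Set.mem_setOf_eq] at h
    simp only [hg, inner_sub_left, inner_sub_right]
    linarith [h]
  constructor
  · refine ⟨convex_univ, ?_⟩
    intro x _ y _ a a' ha ha' hab
    have hx := hsmax x (hsmem (a • x + a' • y))
    have hy := hsmax y (hsmem (a • x + a' • y))
    simp only [Set.mem_setOf_eq] at hx hy
    set s := smax (a • x + a' • y) with hsdef
    have hi : ⟪a • x + a' • y, s⟫ = a * ⟪x, s⟫ + a' * ⟪y, s⟫ := by
      rw [inner_add_left, real_inner_smul_left, real_inner_smul_left]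
    have e1 : (a + a') * b s = 1 * b s := by rw [hab]
    have e2 : (a + a') * (c * d s) = 1 * (c * d s) := by rw [hab]
    simp only [hg, smul_eq_mul, ← hsdef]
    rw [hi]
    have hxa := mul_le_mul_of_nonneg_left hx ha
    have hya := mul_le_mul_of_nonneg_left hy ha'
    nlinarith [hxa, hya, e1, e2]
  · intro lam
    rw [hasGradientAt_iff_isLittleO]
    have hbound : ∀ mu, ‖g mu - g lam - ⟪-(smax lam), mu - lam⟫‖
        ≤ (4 / (c * σ)) * ‖mu - lam‖ * ‖mu - lam‖ := by
      intro mu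
      have e : ⟪-(smax lam), mu - lam⟫ = -⟪mu - lam, smax lam⟫ := by
        rw [real_inner_comm, inner_neg_right]
      rw [e, sub_neg_eq_add]
      have h1 := lower lam mu
      have h2 := upper lam mu
      have h3 : ⟪mu - lam, smax lam - smax mu⟫ ≤ ‖mu - lam‖ * ‖smax lam - smax mu‖ :=
        real_inner_le_norm _ _
      have h4 : ‖smax lam - smax mu‖ ≤ 4 / (c * σ) * ‖mu - lam‖ := by
        rw [norm_sub_rev]; exact lip lam mu
      rw [Real.norm_eq_abs, abs_of_nonneg h1]
      calc g mu - g lam + ⟪mu - lam, smax lam⟫ ≤ ‖mu - lam‖ * ‖smax lam - smax mu‖ :=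
            le_trans h2 h3
        _ ≤ ‖mu - lam‖ * (4 / (c * σ) * ‖mu - lam‖) :=
            mul_le_mul_of_nonneg_left h4 (norm_nonneg _)
        _ = 4 / (c * σ) * ‖mu - lam‖ * ‖mu - lam‖ := by ring
    have hO : (fun mu : EuclideanSpace ℝ (Fin N) =>
        g mu - g lam - ⟪-(smax lam), mu - lam⟫)
        =O[nhds lam] fun mu => ‖mu - lam‖ * ‖mu - lam‖ := by
      apply Asymptotics.IsBigO.of_bound (4 / (c * σ))
      filter_upwards with mu
      have := hbound mu
      simpa [abs_of_nonneg (mul_nonneg (norm_nonneg _) (norm_nonneg _)), mul_assoc] using this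
    have ho : (fun mu : EuclideanSpace ℝ (Fin N) => ‖mu - lam‖ * ‖mu - lam‖)
        =o[nhds lam] fun mu => mu - lam := by
      have h1 : Filter.Tendsto (fun mu : EuclideanSpace ℝ (Fin N) => ‖mu - lam‖)
          (nhds lam) (nhds 0) := by
        have h0 : Filter.Tendsto (fun mu : EuclideanSpace ℝ (Fin N) => mu - lam)
            (nhds lam) (nhds (lam - lam)) :=
          (continuous_id.sub continuous_const).tendsto lam
        rw [sub_self] at h0
        simpa using h0.norm
      have h2 : (fun mu : EuclideanSpace ℝ (Fin N) => ‖mu - lam‖)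
          =O[nhds lam] fun mu => mu - lam :=
        Asymptotics.isBigO_of_le _ (fun mu => by simp)
      calc (fun mu : EuclideanSpace ℝ (Fin N) => ‖mu - lam‖ * ‖mu - lam‖)
          =o[nhds lam] fun mu => (1:ℝ) * ‖mu - lam‖ :=
            (Asymptotics.isLittleO_one_iff ℝ |>.mpr h1).mul_isBigO
              (Asymptotics.isBigO_refl _ _)
        _ =O[nhds lam] fun mu => mu - lam := by simpa using h2
    exact hO.trans_isLittleO ho
end

section
/- Lipschitz gradient of the smoothed dual: in the setting of the previous statement (S compact convex, b concave continuous, d strongly convex with parameter σ, c > 0), the map λ ↦ s(λ), where s(λ) = argmax_{s ∈ S} [ b(s) − λᵀs − c·d(s) ], is Lipschitz continuous with constant 1/(cσ): ‖s(λ) − s(μ)‖ ≤ (1/(cσ))·‖λ − μ‖ for all λ, μ ∈ ℝᴺ. -/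
open RealInnerProductSpace

theorem argmax_lipschitz (N : ℕ) (S : Set (EuclideanSpace ℝ (Fin N)))
    (hSne : S.Nonempty) (hScpt : IsCompact S) (hScvx : Convex ℝ S)
    (b d : EuclideanSpace ℝ (Fin N) → ℝ)
    (hb : ConcaveOn ℝ S b) (hbc : ContinuousOn b S)
    (σ : ℝ) (hσ : 0 < σ) (hd : StrongConvexOn S σ d) (hdc : ContinuousOn d S)
    (c : ℝ) (hc : 0 < c)
    (smax : EuclideanSpace ℝ (Fin N) → EuclideanSpace ℝ (Fin N))
    (hsmem : ∀ lam, smax lam ∈ S)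
    (hsmax : ∀ lam, IsMaxOn (fun s => b s - ⟪lam, s⟫ - c * d s) S (smax lam)) :
    ∀ lam mu, ‖smax lam - smax mu‖ ≤ (1 / (c * σ)) * ‖lam - mu‖ := by
  have key : ∀ lam mu : EuclideanSpace ℝ (Fin N), ∀ t ∈ Set.Ioo (0:ℝ) 1,
      c * (σ / 2) * (1 - t) * ‖smax lam - smax mu‖ ^ 2 ≤
        (b (smax lam) - ⟪lam, smax lam⟫ - c * d (smax lam)) -
        (b (smax mu) - ⟪lam, smax mu⟫ - c * d (smax mu)) := by
    intro lam mu t ht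
    obtain ⟨ht0, ht1⟩ := ht
    set x := smax lam with hx
    set y := smax mu with hy
    have ha : (0:ℝ) ≤ 1 - t := by linarith
    have hab : (1 - t) + t = 1 := by ring
    have hz : (1 - t) • x + t • y ∈ S := hScvx (hsmem lam) (hsmem mu) ha ht0.le hab
    have hmax := hsmax lam hz
    simp only [] at hmax
    have hbz : (1 - t) * b x + t * b y ≤ b ((1 - t) • x + t • y) :=
      hb.2 (hsmem lam) (hsmem mu) ha ht0.le hab
    have hdz : d ((1 - t) • x + t • y) ≤
        (1 - t) * d x + t * d y - (1 - t) * t * (σ / 2 * ‖x - y‖ ^ 2) :=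
      hd.2 (hsmem lam) (hsmem mu) ha ht0.le hab
    have hinner : ⟪lam, (1 - t) • x + t • y⟫ = (1 - t) * ⟪lam, x⟫ + t * ⟪lam, y⟫ := by
      rw [inner_add_right, real_inner_smul_right, real_inner_smul_right]
    have hmax' : b ((1 - t) • x + t • y) - ((1 - t) * ⟪lam, x⟫ + t * ⟪lam, y⟫)
        - c * d ((1 - t) • x + t • y) ≤ b x - ⟪lam, x⟫ - c * d x := by
      have h := hmax
      simp only [Set.mem_setOf_eq] at h
      rw [hinner] at h
      exact h
    have hstep : t * ((b y - ⟪lam, y⟫ - c * d y) + c * (σ / 2) * (1 - t) * ‖x - y‖ ^ 2)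
        ≤ t * (b x - ⟪lam, x⟫ - c * d x) := by
      nlinarith [hmax', hbz, mul_le_mul_of_nonneg_left hdz hc.le]
    have := le_of_mul_le_mul_left (by linarith [hstep] : t * ((b y - ⟪lam, y⟫ - c * d y) + c * (σ / 2) * (1 - t) * ‖x - y‖ ^ 2) ≤ t * (b x - ⟪lam, x⟫ - c * d x)) ht0
    linarith
  intro lam mu
  set x := smax lam with hx
  set y := smax mu with hy
  set r := ‖x - y‖ with hr
  have hr0 : 0 ≤ r := norm_nonneg _
  have hmain : c * σ * r ^ 2 ≤ ‖lam - mu‖ * r := by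
    have hsum : ∀ t ∈ Set.Ioo (0:ℝ) 1, c * σ * (1 - t) * r ^ 2 ≤ ‖lam - mu‖ * r := by
      intro t ht
      have K1 := key lam mu t ht
      have K2 := key mu lam t ht
      rw [show smax mu - smax lam = -(x - y) by simp [hx, hy], norm_neg, ← hr] at K2
      rw [← hx, ← hy, ← hr] at K1
      have hin : (b x - ⟪lam, x⟫ - c * d x) - (b y - ⟪lam, y⟫ - c * d y)
          + ((b y - ⟪mu, y⟫ - c * d y) - (b x - ⟪mu, x⟫ - c * d x))
          = ⟪mu - lam, x - y⟫ := by
        simp [inner_sub_left, inner_sub_right]; ring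
      have hcs : ⟪mu - lam, x - y⟫ ≤ ‖lam - mu‖ * r := by
        calc ⟪mu - lam, x - y⟫ ≤ ‖mu - lam‖ * ‖x - y‖ := real_inner_le_norm _ _
          _ = ‖lam - mu‖ * r := by rw [norm_sub_rev]
      nlinarith [K1, K2]
    have htend : Filter.Tendsto (fun t : ℝ => c * σ * (1 - t) * r ^ 2)
        (nhdsWithin 0 (Set.Ioi 0)) (nhds (c * σ * r ^ 2)) := by
      have hcont : Continuous fun t : ℝ => c * σ * (1 - t) * r ^ 2 := by continuity
      have h2 := (hcont.tendsto 0).mono_left (nhdsWithin_le_nhds (s := Set.Ioi (0:ℝ)))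
      simpa using h2
    refine le_of_tendsto htend ?_
    filter_upwards [Ioo_mem_nhdsGT_of_mem (by constructor <;> norm_num : (0:ℝ) ∈ Set.Ico (0:ℝ) 1)] with t ht
    exact hsum t ht
  rcases eq_or_lt_of_le hr0 with h0 | hpos
  · rw [← h0]
    positivity
  · have hcσ : 0 < c * σ := mul_pos hc hσ
    rw [div_mul_eq_mul_div, one_mul, le_div_iff₀ hcσ]
    have := (mul_le_mul_iff_of_pos_right hpos).mp (by nlinarith [hmain] : (r * (c * σ)) * r ≤ ‖lam - mu‖ * r)
    linarith
end
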